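/- Let p be a monic polynomial of degree d with only nonnegative real roots, with root multiset Λ, and let k be the number of zeros in Λ. For each n ≥ 1 let λ_1^(n) ≥ ... ≥ λ_d^(n) be the nonnegative real roots of p^{⊠_d n}. Then for every 1 ≤ i ≤ d−k and every n ≥ 1, binom(d,i−1)^{-1/n} · ẽ_i(Λ)/ẽ_{i−1}(Λ) ≤ (λ_i^(n))^{1/n} ≤ binom(d,i)^{1/n} · ẽ_i(Λ)/ẽ_{i−1}(Λ). -/

import Mathlib

open Polynomial Filter

/-- Finite free multiplicative convolution of two polynomials of degree `d`:
for `p(x) = Σ (-1)^i p_i x^{d-i}` and `q(x) = Σ (-1)^i q_i x^{d-i}`,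
`(p ⊠_d q)(x) = Σ (-1)^i (p_i q_i / binom(d,i)) x^{d-i}`. -/
noncomputable def ffmul (d : ℕ) (p q : Polynomial ℝ) : Polynomial ℝ :=
  ∑ i ∈ Finset.range (d + 1),
    Polynomial.C ((-1 : ℝ) ^ i * p.coeff (d - i) * q.coeff (d - i) / (d.choose i : ℝ)) *
      Polynomial.X ^ (d - i)

/-- `ffmulPow d p n` is the `n`-th finite free multiplicative convolution power `p^{⊠_d n}`
(for `n ≥ 1`); the convolution identity `(x-1)^d` is used as the 0-th power. -/
noncomputable def ffmulPow (d : ℕ) (p : Polynomial ℝ) : ℕ → Polynomial ℝ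
  | 0 => (Polynomial.X - 1) ^ d
  | n + 1 => ffmul d p (ffmulPow d p n)

/-- Normalized elementary symmetric function `ẽ_i(Λ) = e_i(Λ) / binom(d,i)`. -/
noncomputable def etilde (d i : ℕ) (Λ : Multiset ℝ) : ℝ :=
  Λ.esymm i / (d.choose i : ℝ)

/-- If `Λ` has at least `j` nonzero (hence positive) elements, then `e_j(Λ) > 0`. -/
lemma aux_esymm_pos (Λ : Multiset ℝ) (hnn : ∀ x ∈ Λ, (0:ℝ) ≤ x) (j : ℕ)
    (hj : j ≤ Multiset.card (Λ.filter (fun x => x ≠ 0))) : 0 < Λ.esymm j := by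
  set Λ' := Λ.filter (fun x => x ≠ 0) with hΛ'
  have hcardpos : 0 < Multiset.card (Λ'.powersetCard j) := by
    rw [Multiset.card_powersetCard]; exact Nat.choose_pos hj
  obtain ⟨t, ht⟩ := Multiset.card_pos_iff_exists_mem.1 hcardpos
  rw [Multiset.mem_powersetCard] at ht
  have htΛ : t ≤ Λ := le_trans ht.1 (Multiset.filter_le _ _)
  have htp : 0 < t.prod := by
    apply Multiset.prod_pos
    intro x hx
    have hxΛ' : x ∈ Λ' := Multiset.mem_of_le ht.1 hx
    have hxne : x ≠ 0 := (Multiset.mem_filter.1 hxΛ').2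
    exact lt_of_le_of_ne (hnn x (Multiset.mem_of_le htΛ hx)) (Ne.symm hxne)
  have hmem : t.prod ∈ (Λ.powersetCard j).map Multiset.prod :=
    Multiset.mem_map_of_mem _ (Multiset.mem_powersetCard.2 ⟨htΛ, ht.2⟩)
  obtain ⟨s, hs⟩ := Multiset.exists_cons_of_mem hmem
  have hsum : Λ.esymm j = t.prod + s.sum := by rw [Multiset.esymm, hs, Multiset.sum_cons]
  have hs0 : 0 ≤ s.sum := by
    apply Multiset.sum_nonneg
    intro y hy
    have : y ∈ (Λ.powersetCard j).map Multiset.prod := by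
      rw [hs]; exact Multiset.mem_cons_of_mem hy
    obtain ⟨u, hu, rfl⟩ := Multiset.mem_map.1 this
    exact Multiset.prod_nonneg fun x hx =>
      hnn x (Multiset.mem_of_le (Multiset.mem_powersetCard.1 hu).1 hx)
  rw [hsum]; linarith

/-- For a nonincreasing nonnegative `f` on `[1, d]`, the product over any `i`-subset of
`[1, d]` is at most the product over `[1, i]`. -/
lemma aux_prod_subset_le (d i : ℕ) (f : ℕ → ℝ)
    (hmono : ∀ a b, 1 ≤ a → a ≤ b → b ≤ d → f b ≤ f a)
    (hpos : ∀ a, 1 ≤ a → a ≤ d → 0 ≤ f a)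
    (t : Finset ℕ) (hts : t ⊆ Finset.Icc 1 d) (htc : t.card = i) :
    ∏ j ∈ t, f j ≤ ∏ j ∈ Finset.Icc 1 i, f j := by
  set e := t.orderEmbOfFin htc with he
  have hmemIcc : ∀ m : Fin i, e m ∈ Finset.Icc 1 d := fun m => hts (t.orderEmbOfFin_mem htc m)
  have hle : ∀ m : ℕ, (hm : m < i) → m + 1 ≤ e ⟨m, hm⟩ := by
    intro m
    induction m with
    | zero => intro hm; exact (Finset.mem_Icc.1 (hmemIcc ⟨0, hm⟩)).1
    | succ m ih =>
      intro hm
      have hm' : m < i := Nat.lt_of_succ_lt hm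
      have h1 := ih hm'
      have h2 : e ⟨m, hm'⟩ < e ⟨m + 1, hm⟩ := by
        apply (t.orderEmbOfFin htc).strictMono
        simp [Fin.lt_def]
      omega
  have h1 : ∏ j ∈ t, f j = ∏ m : Fin i, f (e m) := by
    refine (Finset.prod_bij (fun m _ => e m) (fun m _ => t.orderEmbOfFin_mem htc m)
      (fun a _ b _ hab => (t.orderEmbOfFin htc).injective hab) ?_ (fun a _ => rfl)).symm
    intro b hb
    have : b ∈ Set.range e := by rw [he, Finset.range_orderEmbOfFin]; exact hb
    obtain ⟨m, hm⟩ := this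
    exact ⟨m, Finset.mem_univ m, hm⟩
  have h2 : ∏ j ∈ Finset.Icc 1 i, f j = ∏ m : Fin i, f ((m : ℕ) + 1) := by
    refine (Finset.prod_bij (fun (m : Fin i) _ => (m : ℕ) + 1) ?_ ?_ ?_ (fun a _ => rfl)).symm
    · intro m _; simp [Finset.mem_Icc]
    · intro a _ b _ hab; exact Fin.ext (by omega)
    · intro b hb
      rw [Finset.mem_Icc] at hb
      exact ⟨⟨b - 1, by omega⟩, Finset.mem_univ _, by simp; omega⟩
  rw [h1, h2]
  apply Finset.prod_le_prod
  · intro m _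
    have := Finset.mem_Icc.1 (hmemIcc m)
    exact hpos _ this.1 this.2
  · intro m _
    have h3 := hle m.1 m.2
    have h4 := Finset.mem_Icc.1 (hmemIcc m)
    exact hmono (m + 1) (e m) (by omega) (by simpa using h3) h4.2

lemma aux_ffmul_coeff (d j : ℕ) (hj : j ≤ d) (p q : Polynomial ℝ) :
    (ffmul d p q).coeff (d - j)
      = (-1 : ℝ) ^ j * p.coeff (d - j) * q.coeff (d - j) / (d.choose j : ℝ) := by
  rw [ffmul, Polynomial.finset_sum_coeff]
  rw [Finset.sum_eq_single j]
  · rw [Polynomial.coeff_C_mul, Polynomial.coeff_X_pow, if_pos rfl, mul_one]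
  · intro i hi hne
    rw [Finset.mem_range] at hi
    rw [Polynomial.coeff_C_mul, Polynomial.coeff_X_pow, if_neg (by omega), mul_zero]
  · intro h; exact absurd (Finset.mem_range.2 (by omega)) h

lemma aux_p_coeff (d : ℕ) (Λ : Multiset ℝ) (hcard : Multiset.card Λ = d)
    (j : ℕ) (hj : j ≤ d) :
    ((Λ.map fun r => Polynomial.X - Polynomial.C r).prod).coeff (d - j)
      = (-1 : ℝ) ^ j * Λ.esymm j := by
  have h := Multiset.prod_X_sub_C_coeff Λ (k := d - j) (by omega)
  rw [hcard] at h
  rw [h, show d - (d - j) = j from by omega]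

lemma aux_ffmulPow_coeff (d : ℕ) (Λ : Multiset ℝ) (hcard : Multiset.card Λ = d)
    (p : Polynomial ℝ) (hp : p = (Λ.map fun r => Polynomial.X - Polynomial.C r).prod)
    (j : ℕ) (hj : j ≤ d) (n : ℕ) :
    (ffmulPow d p n).coeff (d - j)
      = (-1 : ℝ) ^ j * (etilde d j Λ) ^ n * (d.choose j : ℝ) := by
  have hC : (d.choose j : ℝ) ≠ 0 := Nat.cast_ne_zero.2 (Nat.choose_pos hj).ne'
  induction n with
  | zero =>
    show (((Polynomial.X - 1) ^ d : Polynomial ℝ)).coeff (d - j) = _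
    have : (Polynomial.X - 1 : Polynomial ℝ) = Polynomial.X + Polynomial.C (-1) := by
      simp [sub_eq_add_neg]
    rw [this, Polynomial.coeff_X_add_C_pow]
    have h1 : d - (d - j) = j := by omega
    have h2 : d.choose (d - j) = d.choose j := Nat.choose_symm hj
    rw [h1, h2, pow_zero, mul_one]
  | succ n ih =>
    show (ffmul d p (ffmulPow d p n)).coeff (d - j) = _
    rw [aux_ffmul_coeff d j hj, ih, hp, aux_p_coeff d Λ hcard j hj]
    have he : Λ.esymm j = etilde d j Λ * (d.choose j : ℝ) := by
      rw [etilde, div_mul_cancel₀ _ hC]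
    rw [he]
    have hsign : ((-1 : ℝ)) ^ (j * 3) = (-1) ^ j := by
      rcases Nat.even_or_odd j with h | h
      · rw [h.neg_one_pow, (h.mul_right 3).neg_one_pow]
      · rw [h.neg_one_pow, (h.mul (by decide : Odd 3)).neg_one_pow]
    field_simp
    ring_nf
    rw [mul_comm j 2, pow_mul]; norm_num

/-- explicit bounds
`binom(d,i-1)^{-1/n} ẽ_i/ẽ_{i-1} ≤ (λ_i^(n))^{1/n} ≤ binom(d,i)^{1/n} ẽ_i/ẽ_{i-1}`. -/
theorem root_rpow_bounds (d k : ℕ) (p : Polynomial ℝ) (Λ : Multiset ℝ) (lam : ℕ → ℕ → ℝ)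
    (hcard : Multiset.card Λ = d) (hnonneg : ∀ x ∈ Λ, (0 : ℝ) ≤ x)
    (hp : p = (Λ.map fun r => Polynomial.X - Polynomial.C r).prod)
    (hk : Λ.count 0 = k)
    (hroots : ∀ n, 1 ≤ n → ffmulPow d p n
        = ∏ i ∈ Finset.Icc 1 d, (Polynomial.X - Polynomial.C (lam n i)))
    (hmono : ∀ n, 1 ≤ n → ∀ i j, 1 ≤ i → i ≤ j → j ≤ d → lam n j ≤ lam n i)
    (hnneg : ∀ n, 1 ≤ n → ∀ i, 1 ≤ i → i ≤ d → 0 ≤ lam n i) :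
    ∀ i, 1 ≤ i → i ≤ d - k → ∀ n : ℕ, 1 ≤ n →
      (d.choose (i - 1) : ℝ) ^ (-(1 / (n : ℝ))) * (etilde d i Λ / etilde d (i - 1) Λ)
          ≤ (lam n i) ^ (1 / (n : ℝ)) ∧
        (lam n i) ^ (1 / (n : ℝ))
          ≤ (d.choose i : ℝ) ^ (1 / (n : ℝ)) * (etilde d i Λ / etilde d (i - 1) Λ) := by
  intro i hi1 hik n hn
  obtain ⟨i', rfl⟩ : ∃ i', i = i' + 1 := ⟨i - 1, by omega⟩
  rw [Nat.add_sub_cancel]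
  -- basic facts
  have hkd : k ≤ d := by rw [← hk, ← hcard]; exact Multiset.count_le_card 0 Λ
  have hid : i' + 1 ≤ d := le_trans hik (Nat.sub_le d k)
  have hnR : (n : ℝ) ≠ 0 := Nat.cast_ne_zero.2 (by omega)
  have hinv : (0:ℝ) ≤ 1 / n := by positivity
  -- number of nonzero elements
  have hfc : Multiset.card (Λ.filter (fun x => x ≠ 0)) = d - k := by
    have h1 := Multiset.filter_add_not (fun x => x = 0) Λ
    have h2 : Multiset.card (Λ.filter (fun x => x = 0)) = k := by
      rw [← hk, Multiset.count_eq_card_filter_eq]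
      congr 1
      exact Multiset.filter_congr (fun x _ => eq_comm)
    have h3 := congrArg Multiset.card h1
    rw [Multiset.card_add, hcard, h2] at h3
    have h4 : Multiset.filter (fun x => ¬ x = 0) Λ = Multiset.filter (fun x => x ≠ 0) Λ :=
      Multiset.filter_congr (fun x _ => Iff.rfl)
    rw [h4] at h3
    omega
  -- positivity of the normalized symmetric functions
  have hchoosePos : ∀ j, j ≤ d → (0:ℝ) < (d.choose j : ℝ) :=
    fun j hj => Nat.cast_pos.2 (Nat.choose_pos hj)
  have hetPos : ∀ j, j ≤ d - k → 0 < etilde d j Λ := by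
    intro j hj
    exact div_pos (aux_esymm_pos Λ hnonneg j (by omega)) (hchoosePos j (by omega))
  set a := etilde d (i' + 1) Λ with ha
  set b := etilde d i' Λ with hb
  have hapos : 0 < a := hetPos _ hik
  have hbpos : 0 < b := hetPos _ (by omega)
  -- the roots multiset of the n-th convolution power
  set M : Multiset ℝ := (Finset.Icc 1 d).val.map (lam n) with hM
  have hMcard : Multiset.card M = d := by
    rw [hM, Multiset.card_map]
    show (Finset.Icc 1 d).card = d
    rw [Nat.card_Icc]; omega
  have hprodM : (M.map fun r => Polynomial.X - Polynomial.C r).prod = ffmulPow d p n := by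
    rw [hroots n hn, hM, Finset.prod_eq_multiset_prod, Multiset.map_map]
    rfl
  -- e_j(M) = ẽ_j(Λ)^n * C(d, j)
  have hesymmM : ∀ j, j ≤ d → M.esymm j = (etilde d j Λ) ^ n * (d.choose j : ℝ) := by
    intro j hj
    have h1 := Multiset.prod_X_sub_C_coeff M (k := d - j) (by rw [hMcard]; omega)
    rw [hMcard, show d - (d - j) = j from by omega, hprodM,
      aux_ffmulPow_coeff d Λ hcard p hp j hj n] at h1
    have h2 : ((-1:ℝ)) ^ j * ((etilde d j Λ) ^ n * (d.choose j : ℝ))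
        = ((-1:ℝ)) ^ j * M.esymm j := by rw [← h1]; ring
    exact (mul_left_cancel₀ (pow_ne_zero _ (by norm_num)) h2).symm
  -- partial products of the ordered roots
  set P : ℕ → ℝ := fun j => ∏ x ∈ Finset.Icc 1 j, lam n x with hP
  have hPboundLow : ∀ j, j ≤ d → P j ≤ M.esymm j := by
    intro j hj
    rw [hM, Finset.esymm_map_val]
    apply Finset.single_le_sum (f := fun t => ∏ x ∈ t, lam n x)
    · intro t ht
      rw [Finset.mem_powersetCard] at ht
      exact Finset.prod_nonneg fun x hx => by
        have := Finset.mem_Icc.1 (ht.1 hx)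
        exact hnneg n hn x this.1 this.2
    · rw [Finset.mem_powersetCard]
      constructor
      · exact Finset.Icc_subset_Icc le_rfl hj
      · rw [Nat.card_Icc]; omega
  have hPboundHigh : ∀ j, j ≤ d → M.esymm j ≤ (d.choose j : ℝ) * P j := by
    intro j hj
    rw [hM, Finset.esymm_map_val]
    have hcardP : ((Finset.Icc 1 d).powersetCard j).card = d.choose j := by
      rw [Finset.card_powersetCard, Nat.card_Icc]
      norm_num
    calc ∑ t ∈ (Finset.Icc 1 d).powersetCard j, ∏ x ∈ t, lam n x
        ≤ ((Finset.Icc 1 d).powersetCard j).card • P j := by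
          apply Finset.sum_le_card_nsmul
          intro t ht
          rw [Finset.mem_powersetCard] at ht
          exact aux_prod_subset_le d j (lam n)
            (fun a b h1 h2 h3 => hmono n hn a b h1 h2 h3)
            (fun a h1 h2 => hnneg n hn a h1 h2) t ht.1 ht.2
      _ = (d.choose j : ℝ) * P j := by rw [hcardP, nsmul_eq_mul]
  -- combined bounds: ẽ_j^n ≤ P j ≤ C(d,j) ẽ_j^n
  have hlowP : ∀ j, j ≤ d → (etilde d j Λ) ^ n ≤ P j := by
    intro j hj
    have h1 := hPboundHigh j hj
    rw [hesymmM j hj] at h1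
    have hc := hchoosePos j hj
    nlinarith
  have hhighP : ∀ j, j ≤ d → P j ≤ (d.choose j : ℝ) * (etilde d j Λ) ^ n := by
    intro j hj
    have h1 := hPboundLow j hj
    rw [hesymmM j hj] at h1
    linarith
  -- split the partial product
  have hsplit : P (i' + 1) = P i' * lam n (i' + 1) :=
    Finset.prod_Icc_succ_top (by omega) _
  set L := lam n (i' + 1) with hL
  have hL0 : 0 ≤ L := hnneg n hn _ (by omega) hid
  have hPi'pos : 0 < P i' := lt_of_lt_of_le (by positivity) (hlowP i' (by omega))
  have hC1pos : (0:ℝ) < (d.choose i' : ℝ) := hchoosePos i' (by omega)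
  have hCipos : (0:ℝ) < (d.choose (i' + 1) : ℝ) := hchoosePos _ hid
  -- scalar bounds on L
  have hLlow : a ^ n / ((d.choose i' : ℝ) * b ^ n) ≤ L := by
    rw [div_le_iff₀ (by positivity)]
    have h1 : a ^ n ≤ P i' * L := by rw [← hsplit]; exact hlowP (i' + 1) hid
    have h2 : P i' ≤ (d.choose i' : ℝ) * b ^ n := hhighP i' (by omega)
    nlinarith
  have hLhigh : L ≤ (d.choose (i' + 1) : ℝ) * (a / b) ^ n := by
    have h1 : P i' * L ≤ (d.choose (i' + 1) : ℝ) * a ^ n := by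
      rw [← hsplit]; exact hhighP (i' + 1) hid
    have h2 : b ^ n ≤ P i' := hlowP i' (by omega)
    rw [div_pow, ← mul_div_assoc, le_div_iff₀ (by positivity)]
    nlinarith
  constructor
  · -- lower bound
    have hmonoR := Real.rpow_le_rpow (by positivity) hLlow hinv
    have heq : (a ^ n / ((d.choose i' : ℝ) * b ^ n)) ^ (1 / (n:ℝ))
        = (d.choose i' : ℝ) ^ (-(1 / (n:ℝ))) * (a / b) := by
      have h3 : a ^ n / ((d.choose i' : ℝ) * b ^ n)
          = ((d.choose i' : ℝ))⁻¹ * (a / b) ^ n := by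
        rw [div_pow]; field_simp
      rw [h3, Real.mul_rpow (by positivity) (by positivity),
        Real.inv_rpow hC1pos.le, ← Real.rpow_neg hC1pos.le,
        ← Real.rpow_natCast (a / b) n, ← Real.rpow_mul (by positivity),
        mul_one_div, div_self hnR, Real.rpow_one]
    rw [heq] at hmonoR
    exact hmonoR
  · -- upper bound
    have hmonoR := Real.rpow_le_rpow hL0 hLhigh hinv
    have heq : ((d.choose (i' + 1) : ℝ) * (a / b) ^ n) ^ (1 / (n:ℝ))
        = (d.choose (i' + 1) : ℝ) ^ (1 / (n:ℝ)) * (a / b) := by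
      rw [Real.mul_rpow hCipos.le (by positivity),
        ← Real.rpow_natCast (a / b) n, ← Real.rpow_mul (by positivity),
        mul_one_div, div_self hnR, Real.rpow_one]
    rw [heq] at hmonoR
    exact hmonoR
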